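/- In the quadratic Crawford–Sobel model with uniform prior on [0,1] and bias b > 0, a partition equilibrium with n segments exists if and only if 2n(n-1)b < 1; consequently the number of segments in any equilibrium is bounded above by the largest integer n satisfying n(n-1) < 1/(2b), so only finitely many equilibrium partition sizes exist. -/

import Mathlib

lemma stmt_2_aux (b : ℝ) (n : ℕ) (a : ℕ → ℝ) (h0 : a 0 = 0)
    (hrec : ∀ i, 1 ≤ i → i ≤ n - 1 → a (i + 1) = 2 * a i - a (i - 1) + 4 * b) :
    ∀ i ≤ n, a i = i * a 1 + 2 * i * (i - 1) * b := by
  intro i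
  induction i using Nat.strong_induction_on with
  | _ i ih =>
    match i with
    | 0 => intro _; simp [h0]
    | 1 => intro _; push_cast; ring
    | (k+2) =>
      intro hk
      have h1 := ih (k+1) (by omega) (by omega)
      have h2 := ih k (by omega) (by omega)
      have hr := hrec (k+1) (by omega) (by omega)
      simp only [Nat.add_sub_cancel] at hr
      rw [hr, h1, h2]; push_cast; ring

/-- Existence of an n-segment partition equilibrium iff `2 n (n-1) b < 1`;
hence the number of segments of any equilibrium satisfies `n (n-1) < 1/(2b)`. -/
theorem stmt_2 (b : ℝ) (hb : 0 < b) (n : ℕ) (hn : 1 ≤ n) :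
    ((∃ a : ℕ → ℝ, a 0 = 0 ∧ a n = 1 ∧ (∀ i < n, a i < a (i + 1)) ∧
        ∀ i, 1 ≤ i → i ≤ n - 1 → a (i + 1) = 2 * a i - a (i - 1) + 4 * b) ↔
      2 * (n : ℝ) * ((n : ℝ) - 1) * b < 1) ∧
    ((∃ a : ℕ → ℝ, a 0 = 0 ∧ a n = 1 ∧ (∀ i < n, a i < a (i + 1)) ∧
        ∀ i, 1 ≤ i → i ≤ n - 1 → a (i + 1) = 2 * a i - a (i - 1) + 4 * b) →
      (n : ℝ) * ((n : ℝ) - 1) < 1 / (2 * b)) := by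
  have hn1 : (1 : ℝ) ≤ (n : ℝ) := by exact_mod_cast hn
  have key : (∃ a : ℕ → ℝ, a 0 = 0 ∧ a n = 1 ∧ (∀ i < n, a i < a (i + 1)) ∧
        ∀ i, 1 ≤ i → i ≤ n - 1 → a (i + 1) = 2 * a i - a (i - 1) + 4 * b) ↔
      2 * (n : ℝ) * ((n : ℝ) - 1) * b < 1 := by
    constructor
    · rintro ⟨a, h0, h1, hlt, hrec⟩
      have hform := stmt_2_aux b n a h0 hrec n le_rfl
      rw [h1] at hform
      have ha1 : 0 < a 1 := by
        have := hlt 0 (by omega)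
        rwa [h0] at this
      nlinarith
    · intro h
      set a1 : ℝ := (1 - 2 * n * (n - 1) * b) / n with ha1def
      have hnpos : (0 : ℝ) < n := by linarith
      have ha1 : 0 < a1 := by
        apply div_pos (by linarith) hnpos
      refine ⟨fun i => i * a1 + 2 * i * (i - 1) * b, by norm_num, ?_, ?_, ?_⟩
      · field_simp [ha1def]
        have hmul : a1 * n = 1 - 2 * n * (n - 1) * b := by rw [ha1def]; field_simp
        linear_combination hmul
      · intro i _
        push_cast
        have : (0:ℝ) ≤ (i:ℝ) := Nat.cast_nonneg i
        nlinarith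
      · intro i hi1 _
        have hcast : ((i - 1 : ℕ) : ℝ) = (i : ℝ) - 1 := by
          rw [Nat.cast_sub hi1]; norm_num
        dsimp only
        rw [hcast]
        push_cast
        ring
  refine ⟨key, fun hex => ?_⟩
  have h := key.mp hex
  rw [lt_div_iff₀ (by linarith)]
  nlinarith
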